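/- Let x₀ = (x₁,...,x_s, 0,...,0) ∈ ℝⁿ with |x₁| ≥ ... ≥ |x_s| > 0, and let h ∈ ℝⁿ with ‖h‖₁ ≤ |x_s|. Set β = Σ_{i=1}^s sgn(xᵢ)hᵢ and γ = Σ_{i=1}^s |hᵢ|, and define x' to agree with x = x₀ + h on coordinates 2,...,s−1 and s+1,...,n, with first coordinate x₁ + sgn(x₁)(γ+β)/2 and s-th coordinate x_s − sgn(x_s)(γ−β)/2. Then ‖x'‖₁ = ‖x‖₁ and ‖x'‖₂ ≥ ‖x‖₂; consequently ‖x‖₁/‖x‖₂ ≥ ‖x'‖₁/‖x'‖₂. -/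

import Mathlib

open Finset Real

private lemma abs_add_of_small {c t : ℝ} (hc : c ≠ 0) (ht : |t| ≤ |c|) :
    |c + t| = |c| + Real.sign c * t := by
  have h1 := abs_le.mp ht
  rcases hc.lt_or_gt with h | h
  · rw [abs_of_neg h] at h1
    rw [Real.sign_of_neg h, abs_of_neg h, abs_of_nonpos (by linarith [h1.2])]
    ring
  · rw [abs_of_pos h] at h1
    rw [Real.sign_of_pos h, abs_of_pos h, abs_of_nonneg (by linarith [h1.1])]
    ring

private lemma sq_add_sign (c a : ℝ) (hc : c ≠ 0) :
    (c + Real.sign c * a) ^ 2 = c ^ 2 + 2 * |c| * a + a ^ 2 := by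
  rcases hc.lt_or_gt with h | h
  · rw [Real.sign_of_neg h, abs_of_neg h]; ring
  · rw [Real.sign_of_pos h, abs_of_pos h]; ring

private lemma sum_sq_le_sq_sum {ι : Type*} (s : Finset ι) (f : ι → ℝ)
    (hf : ∀ i ∈ s, 0 ≤ f i) : ∑ i ∈ s, (f i) ^ 2 ≤ (∑ i ∈ s, f i) ^ 2 := by
  calc ∑ i ∈ s, (f i) ^ 2 ≤ ∑ i ∈ s, f i * (∑ j ∈ s, f j) := by
        refine Finset.sum_le_sum fun i hi => ?_
        have h1 : f i ≤ ∑ j ∈ s, f j := Finset.single_le_sum hf hi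
        have h2 := hf i hi
        nlinarith
    _ = (∑ i ∈ s, f i) ^ 2 := by rw [← Finset.sum_mul]; ring

theorem stmt_8 (n s : ℕ) (hs : 2 ≤ s) (hsn : s ≤ n)
    (x0 h : Fin n → ℝ)
    (hsupp : ∀ i : Fin n, s ≤ i.val → x0 i = 0)
    (hnz : ∀ i : Fin n, i.val < s → x0 i ≠ 0)
    (hsort : ∀ i j : Fin n, i ≤ j → j.val < s → |x0 j| ≤ |x0 i|)
    (hh : (∑ i, |h i|) ≤ |x0 ⟨s - 1, by omega⟩|)
    (β γ : ℝ)
    (hβ : β = ∑ i ∈ Finset.univ.filter (fun i : Fin n => i.val < s),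
        Real.sign (x0 i) * h i)
    (hγ : γ = ∑ i ∈ Finset.univ.filter (fun i : Fin n => i.val < s), |h i|)
    (x' : Fin n → ℝ)
    (hx' : x' = fun i =>
      if i.val = 0 then x0 i + Real.sign (x0 i) * ((γ + β) / 2)
      else if i.val = s - 1 then x0 i - Real.sign (x0 i) * ((γ - β) / 2)
      else if i.val < s then x0 i
      else x0 i + h i) :
    (∑ i, |x' i|) = (∑ i, |x0 i + h i|) ∧
    Real.sqrt (∑ i, (x' i) ^ 2) ≥ Real.sqrt (∑ i, (x0 i + h i) ^ 2) ∧
    (∑ i, |x0 i + h i|) / Real.sqrt (∑ i, (x0 i + h i) ^ 2)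
      ≥ (∑ i, |x' i|) / Real.sqrt (∑ i, (x' i) ^ 2) := by
  classical
  set S : Finset (Fin n) := Finset.univ.filter (fun i : Fin n => i.val < s) with hSdef
  set i0 : Fin n := ⟨0, by omega⟩ with hi0def
  set i1 : Fin n := ⟨s - 1, by omega⟩ with hi1def
  have hmemS : ∀ i : Fin n, i ∈ S ↔ i.val < s := by
    intro i; simp [hSdef]
  have hi0S : i0 ∈ S := by rw [hmemS]; simp [hi0def]; omega
  have hi1S : i1 ∈ S := by rw [hmemS]; simp [hi1def]; omega
  have hne01 : i0 ≠ i1 := by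
    intro hcon
    have := congrArg Fin.val hcon
    simp [hi0def, hi1def] at this
    omega
  have hh' : (∑ i, |h i|) ≤ |x0 i1| := hh
  -- per-coordinate bound |h i| ≤ |x0 i| for i ∈ S, and |x0 i1| ≤ |x0 i|
  have hx1le : ∀ i ∈ S, |x0 i1| ≤ |x0 i| := by
    intro i hi
    refine hsort i i1 ?_ (by simp [hi1def]; omega)
    rw [Fin.le_def]
    have := (hmemS i).mp hi
    simp [hi1def]; omega
  have hhle : ∀ i ∈ S, |h i| ≤ |x0 i| := by
    intro i hi
    have h1 : |h i| ≤ ∑ j, |h j| :=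
      Finset.single_le_sum (f := fun j => |h j|) (fun j _ => abs_nonneg _) (Finset.mem_univ i)
    exact h1.trans (hh'.trans (hx1le i hi))
  -- t i = sign (x0 i) * h i
  set t : Fin n → ℝ := fun i => Real.sign (x0 i) * h i with htdef
  have hsgn : ∀ i ∈ S, Real.sign (x0 i) = 1 ∨ Real.sign (x0 i) = -1 := by
    intro i hi
    rcases (Real.sign_apply_eq_of_ne_zero _ (hnz i ((hmemS i).mp hi))) with h1 | h1
    · exact Or.inr h1
    · exact Or.inl h1
  have habst : ∀ i ∈ S, |t i| = |h i| := by
    intro i hi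
    rcases hsgn i hi with h1 | h1 <;> simp [htdef, h1, abs_mul]
  have hht : ∀ i ∈ S, h i = Real.sign (x0 i) * t i := by
    intro i hi
    rcases hsgn i hi with h1 | h1 <;> simp [htdef, h1] <;> ring
  have hβt : β = ∑ i ∈ S, t i := hβ
  have hγt : γ = ∑ i ∈ S, |t i| := by
    rw [hγ]; exact Finset.sum_congr rfl fun i hi => (habst i hi).symm
  have hγnn : 0 ≤ γ := by
    rw [hγ]; exact Finset.sum_nonneg fun i _ => abs_nonneg _
  have hβγ : |β| ≤ γ := by
    rw [hβt, hγt]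
    exact (Finset.abs_sum_le_sum_abs _ _)
  have hβγ' := abs_le.mp hβγ
  set a : ℝ := (γ + β) / 2 with hadef
  set b : ℝ := (γ - β) / 2 with hbdef
  have hann : 0 ≤ a := by rw [hadef]; linarith [hβγ'.1]
  have hbnn : 0 ≤ b := by rw [hbdef]; linarith [hβγ'.2]
  have hγle : γ ≤ |x0 i1| := by
    refine le_trans ?_ hh'
    rw [hγ]
    exact Finset.sum_le_sum_of_subset_of_nonneg (Finset.filter_subset _ _)
      (fun i _ _ => abs_nonneg _)
  have hale : a ≤ |x0 i1| := by rw [hadef]; linarith [hβγ'.2]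
  have hble : b ≤ |x0 i1| := by rw [hbdef]; linarith [hβγ'.1]
  -- x' values
  have hx'out : ∀ i : Fin n, ¬ i.val < s → x' i = x0 i + h i := by
    intro i hi
    have h1 : ¬ i.val = 0 := by omega
    have h2 : ¬ i.val = s - 1 := by omega
    simp [hx', h1, h2, hi]
  have hx'mid : ∀ i ∈ S, i ≠ i0 → i ≠ i1 → x' i = x0 i := by
    intro i hi hni0 hni1
    have hilt := (hmemS i).mp hi
    have h1 : ¬ i.val = 0 := fun hc => hni0 (Fin.ext (by simp [hi0def, hc]))
    have h2 : ¬ i.val = s - 1 := fun hc => hni1 (Fin.ext (by simp [hi1def, hc]))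
    simp [hx', h1, h2, hilt]
  have hx'0 : x' i0 = x0 i0 + Real.sign (x0 i0) * a := by
    simp [hx', hi0def, hadef]
  have hx'1 : x' i1 = x0 i1 - Real.sign (x0 i1) * b := by
    have h1 : ¬ (i1 : Fin n).val = 0 := by simp [hi1def]; omega
    simp [hx', h1, hbdef, show (i1 : Fin n).val = s - 1 from rfl, show s - 1 ≠ 0 by omega]
  -- nonzero on S
  have hnzS : ∀ i ∈ S, x0 i ≠ 0 := fun i hi => hnz i ((hmemS i).mp hi)
  -- ℓ¹ computations on S
  have hsum1x : ∑ i ∈ S, |x0 i + h i| = (∑ i ∈ S, |x0 i|) + β := by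
    rw [hβt, ← Finset.sum_add_distrib]
    refine Finset.sum_congr rfl fun i hi => ?_
    exact abs_add_of_small (hnzS i hi) (hhle i hi)
  have hsum1x' : ∑ i ∈ S, |x' i| = (∑ i ∈ S, |x0 i|) + a - b := by
    have hstep : ∑ i ∈ S, |x' i|
        = ∑ i ∈ S, (|x0 i| + (if i = i0 then a else 0) - (if i = i1 then b else 0)) := by
      refine Finset.sum_congr rfl fun i hi => ?_
      by_cases h0 : i = i0
      · rw [h0, hx'0, if_pos rfl, if_neg hne01]
        have hsa : |Real.sign (x0 i0) * a| ≤ |x0 i0| := by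
          have habs : |Real.sign (x0 i0) * a| = a := by
            rcases hsgn i0 hi0S with h1 | h1
            · rw [h1, one_mul, abs_of_nonneg hann]
            · rw [h1, neg_one_mul, abs_neg, abs_of_nonneg hann]
          rw [habs]; exact hale.trans (hx1le i0 hi0S)
        rw [abs_add_of_small (hnzS i0 hi0S) hsa]
        rcases hsgn i0 hi0S with h1 | h1 <;> rw [h1] <;> ring
      · by_cases h1 : i = i1
        · rw [h1, hx'1, if_neg (h1 ▸ h0), if_pos rfl]
          have hsb : |-(Real.sign (x0 i1) * b)| ≤ |x0 i1| := by
            have habs : |-(Real.sign (x0 i1) * b)| = b := by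
              rcases hsgn i1 hi1S with h2 | h2
              · rw [h2, one_mul, abs_neg, abs_of_nonneg hbnn]
              · rw [h2, neg_one_mul, neg_neg, abs_of_nonneg hbnn]
            rw [habs]; exact hble
          have heq : x0 i1 - Real.sign (x0 i1) * b
              = x0 i1 + (-(Real.sign (x0 i1) * b)) := by ring
          rw [heq, abs_add_of_small (hnzS i1 hi1S) hsb]
          rcases hsgn i1 hi1S with h2 | h2 <;> rw [h2] <;> ring
        · rw [hx'mid i hi h0 h1, if_neg h0, if_neg h1]; ring
    rw [hstep, Finset.sum_sub_distrib, Finset.sum_add_distrib,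
      Finset.sum_ite_eq' S i0 (fun _ => a), Finset.sum_ite_eq' S i1 (fun _ => b),
      if_pos hi0S, if_pos hi1S]
  have hl1 : (∑ i, |x' i|) = (∑ i, |x0 i + h i|) := by
    rw [← Finset.sum_filter_add_sum_filter_not Finset.univ (fun i : Fin n => i.val < s)
        (fun i => |x' i|),
      ← Finset.sum_filter_add_sum_filter_not Finset.univ (fun i : Fin n => i.val < s)
        (fun i => |x0 i + h i|)]
    have heq2 : ∑ i ∈ Finset.univ.filter (fun i : Fin n => ¬ i.val < s), |x' i|
        = ∑ i ∈ Finset.univ.filter (fun i : Fin n => ¬ i.val < s), |x0 i + h i| := by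
      refine Finset.sum_congr rfl fun i hi => ?_
      rw [hx'out i (by simpa using (Finset.mem_filter.mp hi).2)]
    rw [heq2]
    congr 1
    rw [show (Finset.univ.filter fun i : Fin n => i.val < s) = S from rfl, hsum1x, hsum1x']
    rw [hadef, hbdef]; ring
  -- ℓ² computations on S
  have hsum2x : ∑ i ∈ S, (x0 i + h i) ^ 2
      = ∑ i ∈ S, ((x0 i) ^ 2 + 2 * |x0 i| * t i + (t i) ^ 2) := by
    refine Finset.sum_congr rfl fun i hi => ?_
    rw [hht i hi]
    exact sq_add_sign (x0 i) (t i) (hnzS i hi)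
  have hsum2x' : ∑ i ∈ S, (x' i) ^ 2
      = (∑ i ∈ S, (x0 i) ^ 2) + (2 * |x0 i0| * a + a ^ 2) + (b ^ 2 - 2 * |x0 i1| * b) := by
    have hstep : ∑ i ∈ S, (x' i) ^ 2
        = ∑ i ∈ S, ((x0 i) ^ 2 + (if i = i0 then 2 * |x0 i0| * a + a ^ 2 else 0)
            + (if i = i1 then b ^ 2 - 2 * |x0 i1| * b else 0)) := by
      refine Finset.sum_congr rfl fun i hi => ?_
      by_cases h0 : i = i0
      · rw [h0, hx'0, if_pos rfl, if_neg hne01, sq_add_sign (x0 i0) a (hnzS i0 hi0S)]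
        ring
      · by_cases h1 : i = i1
        · rw [h1, hx'1, if_neg (h1 ▸ h0), if_pos rfl]
          have heq : x0 i1 - Real.sign (x0 i1) * b
              = x0 i1 + Real.sign (x0 i1) * (-b) := by ring
          rw [heq, sq_add_sign (x0 i1) (-b) (hnzS i1 hi1S)]
          ring
        · rw [hx'mid i hi h0 h1, if_neg h0, if_neg h1]; ring
    rw [hstep, Finset.sum_add_distrib, Finset.sum_add_distrib,
      Finset.sum_ite_eq' S i0 (fun _ => 2 * |x0 i0| * a + a ^ 2),
      Finset.sum_ite_eq' S i1 (fun _ => b ^ 2 - 2 * |x0 i1| * b),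
      if_pos hi0S, if_pos hi1S]
  -- positive and negative parts
  set p : Fin n → ℝ := fun i => max (t i) 0 with hpdef
  set q : Fin n → ℝ := fun i => max (-(t i)) 0 with hqdef
  have hpq : ∀ i, t i = p i - q i := by
    intro i
    show t i = max (t i) 0 - max (-(t i)) 0
    rcases le_total (t i) 0 with h1 | h1
    · rw [max_eq_right h1, max_eq_left (neg_nonneg.mpr h1)]; ring
    · rw [max_eq_left h1, max_eq_right (neg_nonpos.mpr h1)]; ring
  have hpqabs : ∀ i, |t i| = p i + q i := by
    intro i
    show |t i| = max (t i) 0 + max (-(t i)) 0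
    rcases le_total (t i) 0 with h1 | h1
    · rw [abs_of_nonpos h1, max_eq_right h1, max_eq_left (neg_nonneg.mpr h1)]; ring
    · rw [abs_of_nonneg h1, max_eq_left h1, max_eq_right (neg_nonpos.mpr h1)]; ring
  have hpnn : ∀ i, 0 ≤ p i := fun i => le_max_right _ _
  have hqnn : ∀ i, 0 ≤ q i := fun i => le_max_right _ _
  have hpqzero : ∀ i, p i * q i = 0 := by
    intro i
    show max (t i) 0 * max (-(t i)) 0 = 0
    rcases le_total (t i) 0 with h1 | h1
    · rw [max_eq_right h1, zero_mul]
    · rw [max_eq_right (neg_nonpos.mpr h1), mul_zero]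
  have hsqpq : ∀ i, (t i) ^ 2 = (p i) ^ 2 + (q i) ^ 2 := by
    intro i
    rw [hpq i]
    linear_combination (-2 : ℝ) * hpqzero i
  set P : ℝ := ∑ i ∈ S, p i with hPdef
  set N : ℝ := ∑ i ∈ S, q i with hNdef
  have hβPN : β = P - N := by
    rw [hβt, hPdef, hNdef, ← Finset.sum_sub_distrib]
    exact Finset.sum_congr rfl fun i _ => hpq i
  have hγPN : γ = P + N := by
    rw [hγt, hPdef, hNdef, ← Finset.sum_add_distrib]
    exact Finset.sum_congr rfl fun i _ => hpqabs i
  have haP : a = P := by rw [hadef, hβPN, hγPN]; ring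
  have hbN : b = N := by rw [hbdef, hβPN, hγPN]; ring
  have hPnn : 0 ≤ P := Finset.sum_nonneg fun i _ => hpnn i
  have hNnn : 0 ≤ N := Finset.sum_nonneg fun i _ => hqnn i
  -- key cross-term estimate
  have hcross : ∑ i ∈ S, 2 * |x0 i| * t i ≤ 2 * |x0 i0| * P - 2 * |x0 i1| * N := by
    have hstep : ∑ i ∈ S, 2 * |x0 i| * t i
        ≤ ∑ i ∈ S, (2 * |x0 i0| * p i - 2 * |x0 i1| * q i) := by
      refine Finset.sum_le_sum fun i hi => ?_
      have h1 : |x0 i| ≤ |x0 i0| := by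
        refine hsort i0 i ?_ ((hmemS i).mp hi)
        rw [Fin.le_def]; simp [hi0def]
      have h2 : |x0 i1| ≤ |x0 i| := hx1le i hi
      have h3 := hpq i
      have h4 := hpnn i
      have h5 := hqnn i
      nlinarith
    refine hstep.trans_eq ?_
    rw [Finset.sum_sub_distrib, ← Finset.mul_sum, ← Finset.mul_sum]
  have hsq : ∑ i ∈ S, (t i) ^ 2 ≤ P ^ 2 + N ^ 2 := by
    have h1 : ∑ i ∈ S, (t i) ^ 2 = (∑ i ∈ S, (p i) ^ 2) + (∑ i ∈ S, (q i) ^ 2) := by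
      rw [← Finset.sum_add_distrib]
      exact Finset.sum_congr rfl fun i _ => hsqpq i
    have h2 := sum_sq_le_sq_sum S p (fun i _ => hpnn i)
    have h3 := sum_sq_le_sq_sum S q (fun i _ => hqnn i)
    rw [h1]; rw [hPdef, hNdef]; exact add_le_add h2 h3
  have hl2S : ∑ i ∈ S, (x0 i + h i) ^ 2 ≤ ∑ i ∈ S, (x' i) ^ 2 := by
    rw [hsum2x, hsum2x', haP, hbN]
    rw [Finset.sum_add_distrib, Finset.sum_add_distrib]
    have := hcross
    have := hsq
    linarith
  have hl2 : (∑ i, (x0 i + h i) ^ 2) ≤ (∑ i, (x' i) ^ 2) := by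
    rw [← Finset.sum_filter_add_sum_filter_not Finset.univ (fun i : Fin n => i.val < s)
        (fun i => (x' i) ^ 2),
      ← Finset.sum_filter_add_sum_filter_not Finset.univ (fun i : Fin n => i.val < s)
        (fun i => (x0 i + h i) ^ 2)]
    have heq2 : ∑ i ∈ Finset.univ.filter (fun i : Fin n => ¬ i.val < s), (x' i) ^ 2
        = ∑ i ∈ Finset.univ.filter (fun i : Fin n => ¬ i.val < s), (x0 i + h i) ^ 2 := by
      refine Finset.sum_congr rfl fun i hi => ?_
      rw [hx'out i (by simpa using (Finset.mem_filter.mp hi).2)]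
    rw [heq2]
    exact add_le_add hl2S le_rfl
  have hsqrt : Real.sqrt (∑ i, (x' i) ^ 2) ≥ Real.sqrt (∑ i, (x0 i + h i) ^ 2) :=
    Real.sqrt_le_sqrt hl2
  refine ⟨hl1, hsqrt, ?_⟩
  -- ratio inequality
  by_cases hB : Real.sqrt (∑ i, (x0 i + h i) ^ 2) = 0
  · have hzero : (∑ i, (x0 i + h i) ^ 2) = 0 := by
      have h1 : (∑ i, (x0 i + h i) ^ 2) ≤ 0 := Real.sqrt_eq_zero'.mp hB
      have h2 : 0 ≤ (∑ i, (x0 i + h i) ^ 2) :=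
        Finset.sum_nonneg fun i _ => sq_nonneg _
      linarith
    have hall : ∀ i : Fin n, x0 i + h i = 0 := by
      intro i
      have h1 : ∀ j ∈ Finset.univ, (0:ℝ) ≤ (x0 j + h j) ^ 2 := fun j _ => sq_nonneg _
      have := (Finset.sum_eq_zero_iff_of_nonneg h1).mp hzero i (Finset.mem_univ i)
      exact pow_eq_zero_iff (by norm_num) |>.mp this
    have hA : (∑ i, |x0 i + h i|) = 0 := by
      refine Finset.sum_eq_zero fun i _ => ?_
      rw [hall i, abs_zero]
    rw [hB, hA, hl1, hA]
    simp
  · have hBpos : 0 < Real.sqrt (∑ i, (x0 i + h i) ^ 2) :=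
      lt_of_le_of_ne (Real.sqrt_nonneg _) (Ne.symm hB)
    rw [hl1]
    exact div_le_div_of_nonneg_left
      (Finset.sum_nonneg fun i _ => abs_nonneg _) hBpos hsqrt
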